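/- For any vectors $w_{k-m},\dots,w_k$ and $e_{k-m},\dots,e_k$ in a vector space, defined from sequences $(u_j)$ and $(\tilde u_j)$ by $w_j = \tilde u_j - u_{j-1}$, $e_j = u_j - u_{j-1}$, and with coefficients $\alpha_{k-m},\dots,\alpha_k$ summing to $1$, if additionally $u_k = \sum_{j=k-m}^k \alpha_j \tilde u_j$, then $\sum_{j=k-m}^k \alpha_j w_j = e_k + (1-\alpha_k) e_{k-1} + (1-\alpha_k-\alpha_{k-1}) e_{k-2} + \cdots + (1 - \sum_{j=k-m+1}^k \alpha_j) e_{k-m}$. -/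

import Mathlib

private lemma icc_telescope {V : Type*} [AddCommGroup V] (u : ℤ → V) (a : ℤ) :
    ∀ b : ℤ, a ≤ b → ∑ i ∈ Finset.Icc a b, (u i - u (i - 1)) = u b - u (a - 1) := by
  refine Int.le_induction ?_ ?_
  · simp
  · intro n hn ih
    have hins : Finset.Icc a (n + 1) = insert (n + 1) (Finset.Icc a n) := by
      ext x; simp only [Finset.mem_Icc, Finset.mem_insert]; omega
    rw [hins, Finset.sum_insert (by simp [Finset.mem_Icc]), ih]
    have h2 : n + 1 - 1 = n := by ring
    rw [h2]
    abel

private lemma icc_eq_ioc (a b : ℤ) : Finset.Icc a b = Finset.Ioc (a - 1) b := by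
  ext x; simp [Finset.mem_Icc, Finset.mem_Ioc]

/-- Anderson acceleration residual–increment identity (Lemma 3.2). -/
theorem aa_residual_increment_identity
    {V : Type*} [AddCommGroup V] [Module ℝ V]
    (u utld : ℤ → V) (α : ℤ → ℝ) (m k : ℤ)
    (hm : 1 ≤ m) (hk : m ≤ k)
    (hsum : ∑ j ∈ Finset.Icc (k - m) k, α j = 1)
    (w e : ℤ → V)
    (hw : ∀ j, w j = utld j - u (j - 1))
    (he : ∀ j, e j = u j - u (j - 1))
    (huk : u k = ∑ j ∈ Finset.Icc (k - m) k, α j • utld j) :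
    ∑ j ∈ Finset.Icc (k - m) k, α j • w j
      = ∑ i ∈ Finset.Icc (k - m) k, (1 - ∑ j ∈ Finset.Icc (i + 1) k, α j) • e i := by
  set L := k - m with hL
  -- coefficient identity
  have hc : ∀ i ∈ Finset.Icc L k,
      (1 - ∑ j ∈ Finset.Icc (i + 1) k, α j) = ∑ j ∈ Finset.Icc L i, α j := by
    intro i hi
    rw [Finset.mem_Icc] at hi
    have hsplit : ∑ j ∈ Finset.Icc L i, α j + ∑ j ∈ Finset.Icc (i + 1) k, α j
        = ∑ j ∈ Finset.Icc L k, α j := by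
      rw [icc_eq_ioc L i, icc_eq_ioc (i+1) k, icc_eq_ioc L k]
      have h2 : i + 1 - 1 = i := by ring
      rw [h2]
      have h1 : L - 1 ≤ i := by omega
      rw [← Finset.Ioc_union_Ioc_eq_Ioc h1 hi.2,
        Finset.sum_union (by simp only [Finset.disjoint_left, Finset.mem_Ioc]; intros; omega)]
    rw [hsum] at hsplit
    linarith
  have hc' : ∀ i ∈ Finset.Icc L k,
      (1 - ∑ j ∈ Finset.Icc (i + 1) k, α j) • e i
        = (∑ j ∈ Finset.Icc L i, α j) • e i := by
    intro i hi; rw [hc i hi]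
  rw [Finset.sum_congr rfl hc']
  -- RHS as double sum and swap
  have hRHS : ∑ i ∈ Finset.Icc L k, (∑ j ∈ Finset.Icc L i, α j) • e i
      = ∑ j ∈ Finset.Icc L k, α j • (u k - u (j - 1)) := by
    have : ∀ i ∈ Finset.Icc L k, (∑ j ∈ Finset.Icc L i, α j) • e i
        = ∑ j ∈ Finset.Icc L i, α j • e i := by
      intro i _; rw [Finset.sum_smul]
    rw [Finset.sum_congr rfl this]
    rw [Finset.sum_comm' (s' := fun j => Finset.Icc j k) (t' := Finset.Icc L k)
      (by intro i j; simp only [Finset.mem_Icc]; omega)]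
    apply Finset.sum_congr rfl
    intro j hj
    rw [Finset.mem_Icc] at hj
    rw [← Finset.smul_sum]
    congr 1
    have : ∀ i ∈ Finset.Icc j k, e i = u i - u (i - 1) := fun i _ => he i
    rw [Finset.sum_congr rfl this, icc_telescope u j k hj.2]
  rw [hRHS]
  -- LHS
  have hLHS : ∑ j ∈ Finset.Icc L k, α j • w j
      = ∑ j ∈ Finset.Icc L k, (α j • utld j - α j • u (j - 1)) := by
    apply Finset.sum_congr rfl
    intro j _; rw [hw j, smul_sub]
  rw [hLHS, Finset.sum_sub_distrib, ← huk]
  have : ∀ j ∈ Finset.Icc L k, α j • (u k - u (j - 1))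
      = α j • u k - α j • u (j - 1) := fun j _ => smul_sub _ _ _
  rw [Finset.sum_congr rfl this, Finset.sum_sub_distrib, ← Finset.sum_smul, hsum, one_smul]
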